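/- Let V be a g-dimensional complex vector space, L ⊂ V a lattice of rank 2g, H a Hermitian form on V with E = Im H integer-valued on L × L. Let L_E^⊥ = {x ∈ V : E(x,l) ∈ ℤ for all l ∈ L}. Then the identity component (connected component of 0) of the closed real Lie subgroup L_E^⊥ of V equals ker(H). -/

import Mathlib

/-- Let `V` be a `g`-dimensional complex vector space, `L ⊂ V` a lattice of rank `2g`
(a discrete subgroup spanning `V` over `ℝ`), `H` a Hermitian form on `V` whose
imaginary part `E = Im H` is integer-valued on `L × L`.  Then the connected component
of `0` in `L_E^⊥ = {x ∈ V : E(x,l) ∈ ℤ ∀ l ∈ L}` equals `ker H`. -/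
theorem stmt4 {V : Type*} [NormedAddCommGroup V] [NormedSpace ℂ V]
    [FiniteDimensional ℂ V]
    (L : AddSubgroup V) (hdisc : DiscreteTopology L)
    (hspan : Submodule.span ℝ (L : Set V) = ⊤)
    (H : V → V → ℂ)
    (Hadd : ∀ u v w : V, H (u + v) w = H u w + H v w)
    (Hsmul : ∀ (c : ℂ) (u v : V), H (c • u) v = (starRingEnd ℂ) c * H u v)
    (Hsymm : ∀ u v : V, H v u = (starRingEnd ℂ) (H u v))
    (hint : ∀ l ∈ L, ∀ m ∈ L, ∃ n : ℤ, (H l m).im = (n : ℝ)) :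
    connectedComponentIn {x : V | ∀ l ∈ L, ∃ n : ℤ, (H x l).im = (n : ℝ)} 0 =
      {v : V | ∀ u : V, H v u = 0} := by
  set S : Set V := {x : V | ∀ l ∈ L, ∃ n : ℤ, (H x l).im = (n : ℝ)} with hSdef
  -- H 0 u = 0
  have h0 : ∀ u : V, H 0 u = 0 := by
    intro u
    have h := Hadd 0 0 u
    rw [add_zero] at h
    exact (right_eq_add.mp h)
  -- real smul in first argument
  have Hrsmul : ∀ (r : ℝ) (v u : V), H (r • v) u = (r : ℂ) * H v u := by
    intro r v u
    have h1 : r • v = (r : ℂ) • v := (algebraMap_smul ℂ r v).symm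
    rw [h1, Hsmul, Complex.conj_ofReal]
  -- additivity in second argument
  have Hadd2 : ∀ u v w : V, H u (v + w) = H u v + H u w := by
    intro u v w
    rw [Hsymm (v + w) u, Hadd, map_add, ← Hsymm v u, ← Hsymm w u]
  -- ℂ-linearity (smul) in second argument
  have Hsmul2 : ∀ (c : ℂ) (u v : V), H u (c • v) = c * H u v := by
    intro c u v
    rw [Hsymm (c • v) u, Hsmul, map_mul, Complex.conj_conj, ← Hsymm v u]
  have h02 : ∀ u : V, H u 0 = 0 := by
    intro u
    rw [Hsymm 0 u, h0, map_zero]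
  -- 0 ∈ S
  have h0S : (0 : V) ∈ S := by
    intro l _
    exact ⟨0, by rw [h0]; simp⟩
  ext x
  constructor
  · -- component ⊆ ker H
    intro hx
    have hxS : x ∈ S := connectedComponentIn_subset S 0 hx
    have hconn : IsPreconnected (connectedComponentIn S 0) :=
      (isConnected_connectedComponentIn_iff.mpr h0S).isPreconnected
    have h0mem : (0 : V) ∈ connectedComponentIn S 0 := mem_connectedComponentIn h0S
    -- for every l ∈ L, Im H x l = 0
    have hvanish : ∀ l ∈ L, (H x l).im = 0 := by
      intro l hl
      -- the linear functional v ↦ Im (H v l)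
      let f : V →ₗ[ℝ] ℝ :=
        { toFun := fun v => (H v l).im
          map_add' := fun a b => by simp [Hadd]
          map_smul' := fun r a => by simp [Hrsmul, Complex.mul_im] }
      have hfc : Continuous f := f.continuous_of_finiteDimensional
      by_contra hne
      obtain ⟨n, hn⟩ := hxS l hl
      have hn0 : (n : ℝ) ≠ 0 := by rw [← hn]; exact hne
      have hf0 : f 0 = 0 := by simp [f, h0]
      have hfx : f x = (n : ℝ) := hn
      have hnz : n ≠ 0 := fun h => hn0 (by rw [h]; simp)
      rcases hnz.lt_or_gt with hlt | hgt
      · -- n ≤ -1 : find y with f y = -1/2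
        have himg := hconn.intermediate_value hx h0mem hfc.continuousOn
        have hmem : (-1/2 : ℝ) ∈ Set.Icc (f x) (f 0) := by
          rw [hfx, hf0]
          constructor
          · have : (n : ℝ) ≤ -1 := by exact_mod_cast (show n ≤ -1 by omega)
            linarith
          · linarith
        obtain ⟨y, hy, hfy⟩ := himg hmem
        obtain ⟨m, hm⟩ := connectedComponentIn_subset S 0 hy l hl
        have hfy' : (m : ℝ) = -1/2 := by rw [← hm]; exact hfy
        have h2 : ((2 * m : ℤ) : ℝ) = -1 := by push_cast; linarith
        have h3 : (2 * m : ℤ) = -1 := by exact_mod_cast h2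
        omega
      · -- n ≥ 1 : find y with f y = 1/2
        have himg := hconn.intermediate_value h0mem hx hfc.continuousOn
        have hmem : (1/2 : ℝ) ∈ Set.Icc (f 0) (f x) := by
          rw [hfx, hf0]
          constructor
          · linarith
          · have : (1 : ℝ) ≤ (n : ℝ) := by exact_mod_cast (show 1 ≤ n by omega)
            linarith
        obtain ⟨y, hy, hfy⟩ := himg hmem
        obtain ⟨m, hm⟩ := connectedComponentIn_subset S 0 hy l hl
        have hfy' : (m : ℝ) = 1/2 := by rw [← hm]; exact hfy
        have h2 : ((2 * m : ℤ) : ℝ) = 1 := by push_cast; linarith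
        have h3 : (2 * m : ℤ) = 1 := by exact_mod_cast h2
        omega
    -- extend vanishing from L to all of V via the span
    have hall : ∀ u : V, (H x u).im = 0 := by
      let φ : V →ₗ[ℝ] ℝ :=
        { toFun := fun u => (H x u).im
          map_add' := fun a b => by simp [Hadd2]
          map_smul' := fun r a => by
            simp only [RingHom.id_apply, smul_eq_mul]
            rw [show r • a = (r : ℂ) • a from (algebraMap_smul ℂ r a).symm, Hsmul2]
            simp [Complex.mul_im] }
      have hker : Submodule.span ℝ (L : Set V) ≤ LinearMap.ker φ := by
        rw [Submodule.span_le]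
        intro l hl
        exact hvanish l hl
      rw [hspan, top_le_iff] at hker
      intro u
      have : φ u = 0 := by rw [← LinearMap.mem_ker, hker]; trivial
      exact this
    intro u
    have him : (H x u).im = 0 := hall u
    have hre : (H x u).re = 0 := by
      have := hall (Complex.I • u)
      rw [Hsmul2] at this
      simpa [Complex.mul_im] using this
    exact Complex.ext hre him
  · -- ker H ⊆ component
    intro hx
    have hKconv : Convex ℝ {v : V | ∀ u : V, H v u = 0} := by
      intro a ha b hb s t _ _ _
      intro u
      simp only [Set.mem_setOf_eq] at ha hb ⊢
      rw [Hadd, Hrsmul, Hrsmul, ha u, hb u]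
      simp
    have hKsub : {v : V | ∀ u : V, H v u = 0} ⊆ S := by
      intro v hv l _
      exact ⟨0, by rw [hv l]; simp⟩
    have h0K : (0 : V) ∈ {v : V | ∀ u : V, H v u = 0} := fun u => h0 u
    exact hKconv.isPreconnected.subset_connectedComponentIn h0K hKsub hx
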